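/- Suppose all monotonically nonincreasing sequences in Im(F) are bounded below by a point of Im(F) (completeness assumption A1). Then the sequence {x^k} generated by the MPG algorithm is quasi-Fejér convergent to the set Ω := {x ∈ dom(F) : F(x) ⪯ F(x^k) for all k}, with summable errors ε_k := 2α(F_{j*_k}(x^k) - F_{j*_k}(x^{k+1})) + t_k²‖d^k‖², and hence {x^k} is bounded. -/

import Mathlib

open RealInnerProductSpace

private lemma convex_grad_ineq {E : Type*} [NormedAddCommGroup E] [InnerProductSpace ℝ E]
    [CompleteSpace E] {f : E → ℝ} {f' x : E}
    (hf : ConvexOn ℝ Set.univ f) (hd : HasGradientAt f f' x) (y : E) :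
    f x + ⟪f', y - x⟫ ≤ f y := by
  have hline : HasDerivAt (fun s : ℝ => x + s • (y - x)) (y - x) 0 := by
    simpa using ((hasDerivAt_id (0:ℝ)).smul_const (y - x)).const_add x
  have hg : HasDerivAt (fun s : ℝ => f (x + s • (y - x))) ⟪f', y - x⟫ 0 := by
    have h0 : HasFDerivAt f (InnerProductSpace.toDual ℝ E f') (x + (0:ℝ) • (y - x)) := by
      simpa using hd.hasFDerivAt
    have h1 := h0.comp_hasDerivAt 0 hline
    simp only [InnerProductSpace.toDual_apply_apply] at h1
    exact h1
  have htend : Filter.Tendsto (slope (fun s : ℝ => f (x + s • (y - x))) 0)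
      (nhdsWithin 0 (Set.Ioi 0)) (nhds ⟪f', y - x⟫) :=
    (hasDerivAt_iff_tendsto_slope.mp hg).mono_left
      (nhdsWithin_mono _ (fun s hs => ne_of_gt hs))
  have hslope : ∀ s ∈ Set.Ioc (0:ℝ) 1,
      slope (fun s : ℝ => f (x + s • (y - x))) 0 s ≤ f y - f x := by
    intro s hs
    have hcmb : x + s • (y - x) = (1 - s) • x + s • y := by module
    have hcv := hf.2 (Set.mem_univ x) (Set.mem_univ y)
      (by linarith [hs.2] : (0:ℝ) ≤ 1 - s) hs.1.le (by ring)
    rw [← hcmb] at hcv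
    simp only [slope_def_field, smul_eq_mul, zero_smul, add_zero, sub_zero] at hcv ⊢
    rw [div_le_iff₀ hs.1]
    nlinarith [hcv]
  have := le_of_tendsto htend
    (Filter.eventually_of_mem (Ioc_mem_nhdsGT_of_mem ⟨le_refl (0:ℝ), zero_lt_one⟩) hslope)
  linarith

private lemma vi_lemma {E : Type*} [NormedAddCommGroup E] [InnerProductSpace ℝ E]
    {dom : Set E} {ℓ : E → ℝ} (hconv : ConvexOn ℝ dom ℓ)
    {α : ℝ} (hα : 0 < α) {q x0 : E} (hq : q ∈ dom)
    (hmin : ∀ u ∈ dom, ℓ q + 1 / (2 * α) * ‖q - x0‖ ^ 2 ≤ ℓ u + 1 / (2 * α) * ‖u - x0‖ ^ 2)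
    {u : E} (hu : u ∈ dom) :
    ℓ q ≤ ℓ u + (1 / α) * ⟪q - x0, u - q⟫ := by
  have hc : (0:ℝ) < 1 / (2 * α) := by positivity
  have key : ∀ s : ℝ, 0 < s → s ≤ 1 →
      0 ≤ (ℓ u - ℓ q + 2 * (1 / (2 * α)) * ⟪q - x0, u - q⟫) + s * (1 / (2 * α) * ‖u - q‖ ^ 2) := by
    intro s hs hs1
    have hzmem : q + s • (u - q) ∈ dom := by
      have := hconv.1 hq hu (by linarith : (0:ℝ) ≤ 1 - s) hs.le (by ring)
      have hcmb : q + s • (u - q) = (1 - s) • q + s • u := by module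
      rwa [← hcmb] at this
    have h1 := hmin _ hzmem
    have h2 : ℓ (q + s • (u - q)) ≤ (1 - s) * ℓ q + s * ℓ u := by
      have := hconv.2 hq hu (by linarith : (0:ℝ) ≤ 1 - s) hs.le (by ring)
      have hcmb : q + s • (u - q) = (1 - s) • q + s • u := by module
      rw [← hcmb] at this
      simpa [smul_eq_mul] using this
    have h3 : ‖q + s • (u - q) - x0‖ ^ 2
        = ‖q - x0‖ ^ 2 + 2 * s * ⟪q - x0, u - q⟫ + s ^ 2 * ‖u - q‖ ^ 2 := by
      have hcmb : q + s • (u - q) - x0 = (q - x0) + s • (u - q) := by module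
      rw [hcmb, norm_add_sq_real, real_inner_smul_right, norm_smul, Real.norm_eq_abs,
        mul_pow, sq_abs]
      ring
    rw [h3] at h1
    have h4 : 0 ≤ s * ((ℓ u - ℓ q + 2 * (1 / (2 * α)) * ⟪q - x0, u - q⟫)
        + s * (1 / (2 * α) * ‖u - q‖ ^ 2)) := by nlinarith [h1, h2]
    exact nonneg_of_mul_nonneg_right h4 hs
  have hA : 0 ≤ ℓ u - ℓ q + 2 * (1 / (2 * α)) * ⟪q - x0, u - q⟫ := by
    have hB : 0 ≤ 1 / (2 * α) * ‖u - q‖ ^ 2 := by positivity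
    refine le_of_forall_pos_le_add ?_
    intro ε hε
    set B := 1 / (2 * α) * ‖u - q‖ ^ 2 with hBdef
    have hs : 0 < min 1 (ε / (B + 1)) := lt_min one_pos (div_pos hε (by linarith))
    have h := key _ hs (min_le_left _ _)
    have hsB : min 1 (ε / (B + 1)) * B ≤ ε := by
      have h1 : min 1 (ε / (B + 1)) ≤ ε / (B + 1) := min_le_right _ _
      have h2 : min 1 (ε / (B + 1)) * B ≤ (ε / (B + 1)) * B :=
        mul_le_mul_of_nonneg_right h1 hB
      have h3 : (ε / (B + 1)) * B ≤ ε := by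
        rw [div_mul_eq_mul_div, div_le_iff₀ (by linarith : (0:ℝ) < B + 1)]
        nlinarith
      linarith
    linarith
  have h2c : 2 * (1 / (2 * α)) = 1 / α := by field_simp
  rw [h2c] at hA
  linarith

theorem MPG_quasiFejer {n m : ℕ} (hm : 0 < m)
    (G : Fin m → EuclideanSpace ℝ (Fin n) → ℝ)
    (G' : Fin m → EuclideanSpace ℝ (Fin n) → EuclideanSpace ℝ (Fin n))
    (H : Fin m → EuclideanSpace ℝ (Fin n) → ℝ)
    (dom : Set (EuclideanSpace ℝ (Fin n)))
    (hGconv : ∀ j, ConvexOn ℝ Set.univ (G j))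
    (hGdiff : ∀ j x, HasGradientAt (G j) (G' j x) x)
    (hHconv : ∀ j, ConvexOn ℝ dom (H j))
    (hHcont : ∀ j, ContinuousOn (H j) dom)
    (hdomne : dom.Nonempty) (hdomcl : IsClosed dom) (hdomconv : Convex ℝ dom)
    (α γ : ℝ) (hα : 0 < α) (hγ : 0 < γ) (hγ2 : γ < 2 / α)
    (x p : ℕ → EuclideanSpace ℝ (Fin n)) (t : ℕ → ℝ) (jstar : ℕ → Fin m)
    (hx : ∀ k, x k ∈ dom) (hp : ∀ k, p k ∈ dom)
    (hpmin : ∀ k, IsMinOn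
      (fun u => (⨆ i, (⟪G' i (x k), u - x k⟫ + H i u - H i (x k))) +
        1 / (2 * α) * ‖u - x k‖ ^ 2) dom (p k))
    (ht : ∀ k, 0 < t k ∧ t k ≤ 1)
    (hiter : ∀ k, x (k + 1) = x k + t k • (p k - x k))
    (hjstar : ∀ k, ∀ j, ⟪G' j (x k), p k - x k⟫ ≤ ⟪G' (jstar k) (x k), p k - x k⟫)
    (hdec : ∀ k, G (jstar k) (x (k + 1)) ≤ G (jstar k) (x k) +
      t k * ⟪G' (jstar k) (x k), p k - x k⟫ + t k * (γ / 2) * ‖p k - x k‖ ^ 2)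
    (hmono : ∀ k, ∀ j, G j (x (k + 1)) + H j (x (k + 1)) ≤ G j (x k) + H j (x k))
    (hA1 : ∀ y : ℕ → EuclideanSpace ℝ (Fin n), (∀ k, y k ∈ dom) →
      (∀ k j, G j (y (k + 1)) + H j (y (k + 1)) ≤ G j (y k) + H j (y k)) →
      ∃ ybar ∈ dom, ∀ k j, G j ybar + H j ybar ≤ G j (y k) + H j (y k)) :
    (∀ k, 0 ≤ 2 * α * ((G (jstar k) (x k) + H (jstar k) (x k)) -
        (G (jstar k) (x (k + 1)) + H (jstar k) (x (k + 1)))) + t k ^ 2 * ‖p k - x k‖ ^ 2) ∧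
    Summable (fun k => 2 * α * ((G (jstar k) (x k) + H (jstar k) (x k)) -
        (G (jstar k) (x (k + 1)) + H (jstar k) (x (k + 1)))) + t k ^ 2 * ‖p k - x k‖ ^ 2) ∧
    (∀ xhat, xhat ∈ dom → (∀ k j, G j xhat + H j xhat ≤ G j (x k) + H j (x k)) →
      ∀ k, ‖x (k + 1) - xhat‖ ^ 2 ≤ ‖x k - xhat‖ ^ 2 +
        (2 * α * ((G (jstar k) (x k) + H (jstar k) (x k)) -
          (G (jstar k) (x (k + 1)) + H (jstar k) (x (k + 1)))) + t k ^ 2 * ‖p k - x k‖ ^ 2)) ∧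
    (∃ M : ℝ, ∀ k, ‖x k‖ ≤ M) := by
  haveI : Nonempty (Fin m) := Fin.pos_iff_nonempty.mp hm
  set L : ℕ → EuclideanSpace ℝ (Fin n) → ℝ :=
    fun k u => ⨆ i, (⟪G' i (x k), u - x k⟫ + H i u - H i (x k)) with hLdef
  set eps : ℕ → ℝ := fun k => 2 * α * ((G (jstar k) (x k) + H (jstar k) (x k)) -
        (G (jstar k) (x (k + 1)) + H (jstar k) (x (k + 1)))) + t k ^ 2 * ‖p k - x k‖ ^ 2
    with hepsdef
  have hbdd : ∀ k u, BddAbove (Set.range fun i => ⟪G' i (x k), u - x k⟫ + H i u - H i (x k)) :=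
    fun k u => (Set.finite_range _).bddAbove
  have hLconv : ∀ k, ConvexOn ℝ dom (L k) := by
    intro k
    refine ⟨hdomconv, fun a ha b hb sa sb hsa hsb hab => ?_⟩
    simp only [hLdef, smul_eq_mul]
    refine ciSup_le fun i => ?_
    have hpt : sa • a + sb • b - x k = sa • (a - x k) + sb • (b - x k) := by
      have h : sa • (a - x k) + sb • (b - x k) = sa • a + sb • b - (sa + sb) • x k := by module
      rw [h, hab, one_smul]
    have hin : ⟪G' i (x k), sa • a + sb • b - x k⟫
        = sa * ⟪G' i (x k), a - x k⟫ + sb * ⟪G' i (x k), b - x k⟫ := by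
      rw [hpt, inner_add_right, real_inner_smul_right, real_inner_smul_right]
    have hH := (hHconv i).2 ha hb hsa hsb hab
    simp only [smul_eq_mul] at hH
    have hxh : sa * H i (x k) + sb * H i (x k) = H i (x k) := by
      rw [← add_mul, hab, one_mul]
    have h2a : ⟪G' i (x k), a - x k⟫ + H i a - H i (x k)
        ≤ ⨆ i, (⟪G' i (x k), a - x k⟫ + H i a - H i (x k)) := le_ciSup (hbdd k a) i
    have h2b : ⟪G' i (x k), b - x k⟫ + H i b - H i (x k)
        ≤ ⨆ i, (⟪G' i (x k), b - x k⟫ + H i b - H i (x k)) := le_ciSup (hbdd k b) i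
    have h3a := mul_le_mul_of_nonneg_left h2a hsa
    have h3b := mul_le_mul_of_nonneg_left h2b hsb
    rw [hin]
    linarith
  have hmin' : ∀ k, ∀ u ∈ dom,
      L k (p k) + 1 / (2 * α) * ‖p k - x k‖ ^ 2 ≤ L k u + 1 / (2 * α) * ‖u - x k‖ ^ 2 :=
    fun k u hu => isMinOn_iff.mp (hpmin k) u hu
  have hL0 : ∀ k, L k (x k) = 0 := by
    intro k
    simp [hLdef, ciSup_const]
  have hQle : ∀ k, ⟪G' (jstar k) (x k), p k - x k⟫ + H (jstar k) (p k) - H (jstar k) (x k)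
      ≤ L k (p k) := fun k => le_ciSup (hbdd k (p k)) (jstar k)
  have hinner_self : ∀ k, ⟪p k - x k, x k - p k⟫ = -‖p k - x k‖ ^ 2 := by
    intro k
    rw [show x k - p k = -(p k - x k) from by abel, inner_neg_right,
      real_inner_self_eq_norm_sq]
  have hLp : ∀ k, α * L k (p k) ≤ -‖p k - x k‖ ^ 2 := by
    intro k
    have hvi := vi_lemma (hLconv k) hα (hp k) (hmin' k) (hx k)
    rw [hL0 k, hinner_self k] at hvi
    have h := mul_le_mul_of_nonneg_left hvi hα.le
    have he : α * (0 + 1 / α * -‖p k - x k‖ ^ 2) = -‖p k - x k‖ ^ 2 := by field_simp; try ring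
    linarith
  have hxsucc : ∀ k, x (k + 1) = (1 - t k) • x k + t k • p k := by
    intro k; rw [hiter k]; module
  have hHc : ∀ k, H (jstar k) (x (k + 1))
      ≤ (1 - t k) * H (jstar k) (x k) + t k * H (jstar k) (p k) := by
    intro k
    have h := (hHconv (jstar k)).2 (hx k) (hp k)
      (by linarith [(ht k).2] : (0:ℝ) ≤ 1 - t k) (ht k).1.le (by ring)
    rw [hxsucc k]
    simpa [smul_eq_mul] using h
  have hFdec : ∀ k, G (jstar k) (x (k + 1)) + H (jstar k) (x (k + 1))
      ≤ G (jstar k) (x k) + H (jstar k) (x k)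
        + t k * (⟪G' (jstar k) (x k), p k - x k⟫ + H (jstar k) (p k) - H (jstar k) (x k))
        + t k * (γ / 2) * ‖p k - x k‖ ^ 2 := by
    intro k
    have h1 := hdec k
    have h2 := hHc k
    nlinarith [h1, h2]
  have hαγ : α * γ < 2 := by
    rw [lt_div_iff₀ hα] at hγ2; linarith
  have h2αγ : (0:ℝ) < 2 - α * γ := by linarith
  have hkey : ∀ k, (2 - α * γ) * (t k * ‖p k - x k‖ ^ 2)
      ≤ 2 * α * ((G (jstar k) (x k) + H (jstar k) (x k))
        - (G (jstar k) (x (k + 1)) + H (jstar k) (x (k + 1)))) := by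
    intro k
    have h1 := hFdec k
    have h2 : t k * (α * (⟪G' (jstar k) (x k), p k - x k⟫
          + H (jstar k) (p k) - H (jstar k) (x k)))
        ≤ t k * (-‖p k - x k‖ ^ 2) :=
      mul_le_mul_of_nonneg_left
        ((mul_le_mul_of_nonneg_left (hQle k) hα.le).trans (hLp k)) (ht k).1.le
    have h1' : -(t k * (⟪G' (jstar k) (x k), p k - x k⟫
          + H (jstar k) (p k) - H (jstar k) (x k))) - t k * (γ / 2) * ‖p k - x k‖ ^ 2
        ≤ (G (jstar k) (x k) + H (jstar k) (x k))
          - (G (jstar k) (x (k + 1)) + H (jstar k) (x (k + 1))) := by linarith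
    have h3 := mul_le_mul_of_nonneg_left h1' (by positivity : (0:ℝ) ≤ 2 * α)
    linarith [h3, h2]
  obtain ⟨xb, hxbdom, hxbF⟩ := hA1 x hx hmono
  have hSnn : ∀ k j, 0 ≤ (G j (x k) + H j (x k)) - (G j (x (k + 1)) + H j (x (k + 1))) :=
    fun k j => sub_nonneg.2 (hmono k j)
  have hεnn : ∀ k, 0 ≤ eps k := by
    intro k
    exact add_nonneg (mul_nonneg (by positivity) (hSnn k (jstar k))) (by positivity)
  have hS : Summable (fun k => ∑ j, ((G j (x k) + H j (x k))
      - (G j (x (k + 1)) + H j (x (k + 1))))) := by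
    apply summable_of_sum_range_le
      (c := (∑ j, (G j (x 0) + H j (x 0))) - ∑ j, (G j xb + H j xb))
    · intro k; exact Finset.sum_nonneg fun j _ => hSnn k j
    · intro K
      have hrw : (∑ k ∈ Finset.range K, ∑ j, ((G j (x k) + H j (x k))
          - (G j (x (k + 1)) + H j (x (k + 1)))))
          = ∑ k ∈ Finset.range K, ((∑ j, (G j (x k) + H j (x k)))
            - ∑ j, (G j (x (k + 1)) + H j (x (k + 1)))) := by
        refine Finset.sum_congr rfl fun k _ => ?_
        rw [Finset.sum_sub_distrib]
      rw [hrw, Finset.sum_range_sub' (fun k => ∑ j, (G j (x k) + H j (x k)))]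
      have hlb : (∑ j, (G j xb + H j xb)) ≤ ∑ j, (G j (x K) + H j (x K)) :=
        Finset.sum_le_sum fun j _ => hxbF K j
      linarith
  have hδS : ∀ k, (G (jstar k) (x k) + H (jstar k) (x k))
      - (G (jstar k) (x (k + 1)) + H (jstar k) (x (k + 1)))
      ≤ ∑ j, ((G j (x k) + H j (x k)) - (G j (x (k + 1)) + H j (x (k + 1)))) :=
    fun k => Finset.single_le_sum (fun j _ => hSnn k j) (Finset.mem_univ _)
  set c : ℝ := (2 * α * (2 - α * γ) + 2 * α) / (2 - α * γ) with hcdef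
  have hεle : ∀ k, eps k ≤ c * (∑ j, ((G j (x k) + H j (x k))
      - (G j (x (k + 1)) + H j (x (k + 1))))) := by
    intro k
    rw [hcdef, div_mul_eq_mul_div, le_div_iff₀ h2αγ]
    have hk := hkey k
    have hδ := hδS k
    have htt := (ht k).1
    have ht1 := (ht k).2
    have hD : (0:ℝ) ≤ ‖p k - x k‖ ^ 2 := sq_nonneg _
    have h5 := mul_le_mul_of_nonneg_left hδ (by positivity : (0:ℝ) ≤ 2 * α * (2 - α * γ))
    have h7 := mul_le_mul_of_nonneg_left hδ (by positivity : (0:ℝ) ≤ 2 * α)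
    have h6 : (2 - α * γ) * (t k ^ 2 * ‖p k - x k‖ ^ 2)
        ≤ (2 - α * γ) * (t k * ‖p k - x k‖ ^ 2) := by
      have : t k ^ 2 * ‖p k - x k‖ ^ 2 ≤ t k * ‖p k - x k‖ ^ 2 := by
        nlinarith [mul_nonneg (mul_nonneg htt.le hD) (sub_nonneg.2 ht1)]
      exact mul_le_mul_of_nonneg_left this h2αγ.le
    simp only [hepsdef]
    linarith [hk, h5, h6, h7]
  have hεsum : Summable eps :=
    Summable.of_nonneg_of_le hεnn hεle (hS.mul_left c)
  have part3 : ∀ xhat, xhat ∈ dom → (∀ k j, G j xhat + H j xhat ≤ G j (x k) + H j (x k)) →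
      ∀ k, ‖x (k + 1) - xhat‖ ^ 2 ≤ ‖x k - xhat‖ ^ 2 + eps k := by
    intro xhat hhat hOm k
    have hexp : ‖x (k + 1) - xhat‖ ^ 2 = ‖x k - xhat‖ ^ 2
        + 2 * t k * ⟪x k - xhat, p k - x k⟫ + t k ^ 2 * ‖p k - x k‖ ^ 2 := by
      rw [hiter k, show x k + t k • (p k - x k) - xhat
          = (x k - xhat) + t k • (p k - x k) from by module,
        norm_add_sq_real, real_inner_smul_right, norm_smul, Real.norm_eq_abs, mul_pow, sq_abs]
      ring
    have hLhat : L k xhat ≤ 0 := by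
      simp only [hLdef]
      refine ciSup_le fun j => ?_
      have hg := convex_grad_ineq (hGconv j) (hGdiff j (x k)) xhat
      have hW := hOm k j
      linarith
    have hvi := vi_lemma (hLconv k) hα (hp k) (hmin' k) hhat
    have h5 : ⟪p k - x k, xhat - p k⟫
        = -⟪x k - xhat, p k - x k⟫ - ‖p k - x k‖ ^ 2 := by
      rw [show xhat - p k = -(x k - xhat) - (p k - x k) from by abel, inner_sub_right,
        inner_neg_right, real_inner_self_eq_norm_sq, real_inner_comm]
      try ring
    rw [h5] at hvi
    have h6 := mul_le_mul_of_nonneg_left hvi hα.le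
    have he : α * (L k xhat + 1 / α * (-⟪x k - xhat, p k - x k⟫ - ‖p k - x k‖ ^ 2))
        = α * L k xhat + (-⟪x k - xhat, p k - x k⟫ - ‖p k - x k‖ ^ 2) := by
      field_simp; try ring
    rw [he] at h6
    have h7 : α * L k xhat ≤ 0 := mul_nonpos_of_nonneg_of_nonpos hα.le hLhat
    have h8 := mul_le_mul_of_nonneg_left (hQle k) hα.le
    have hI : ⟪x k - xhat, p k - x k⟫
        ≤ -(α * (⟪G' (jstar k) (x k), p k - x k⟫
            + H (jstar k) (p k) - H (jstar k) (x k))) - ‖p k - x k‖ ^ 2 := by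
      linarith [h6, h7, h8, hLp k]
    have hI2 := mul_le_mul_of_nonneg_left hI (by linarith [(ht k).1] : (0:ℝ) ≤ 2 * t k)
    have h9 := hFdec k
    have h9' := mul_le_mul_of_nonneg_left
      (show -(t k * (⟪G' (jstar k) (x k), p k - x k⟫
          + H (jstar k) (p k) - H (jstar k) (x k))) - t k * (γ / 2) * ‖p k - x k‖ ^ 2
        ≤ (G (jstar k) (x k) + H (jstar k) (x k))
          - (G (jstar k) (x (k + 1)) + H (jstar k) (x (k + 1))) from by linarith)
      (by positivity : (0:ℝ) ≤ 2 * α)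
    have hDpos : 0 ≤ t k * ‖p k - x k‖ ^ 2 * (2 - α * γ) :=
      mul_nonneg (mul_nonneg (ht k).1.le (sq_nonneg _)) h2αγ.le
    rw [hexp]
    simp only [hepsdef]
    linarith [hI2, h9', hDpos]
  refine ⟨hεnn, hεsum, part3, ?_⟩
  have hfe := part3 xb hxbdom hxbF
  have hbd : ∀ k, ‖x k - xb‖ ^ 2 ≤ ‖x 0 - xb‖ ^ 2 + ∑ i ∈ Finset.range k, eps i := by
    intro k
    induction k with
    | zero => simp
    | succ k ih =>
      rw [Finset.sum_range_succ]
      linarith [hfe k]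
  refine ⟨Real.sqrt (‖x 0 - xb‖ ^ 2 + ∑' i, eps i) + ‖xb‖, fun k => ?_⟩
  have h1 : ‖x k‖ - ‖xb‖ ≤ ‖x k - xb‖ := norm_sub_norm_le (x k) xb
  have h2 : ∑ i ∈ Finset.range k, eps i ≤ ∑' i, eps i :=
    Summable.sum_le_tsum _ (fun i _ => hεnn i) hεsum
  have h3 : ‖x k - xb‖ ≤ Real.sqrt (‖x 0 - xb‖ ^ 2 + ∑' i, eps i) := by
    rw [show ‖x k - xb‖ = Real.sqrt (‖x k - xb‖ ^ 2) from (Real.sqrt_sq (norm_nonneg _)).symm]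
    exact Real.sqrt_le_sqrt (by linarith [hbd k])
  linarith
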